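/- Let T be a trail of a k-register SRT and define P^T_{i,j} as the set of step indices n (including the sentinel −1 for the initial value) at which register j receives a 'new' or 'add' update and after which (up to step i) register j is never reset with 'new'. Then for any run with corresponding trail T over input s, the value of register j after step i equals the sum over e ∈ P^T_{i,j} of (the initial value R_0[j] if e = −1, else the input data value s[e]). -/

import Mathlib

/-- Register update instructions of an SRT trail. -/
inductive Upd where
  | old | new | add
deriving DecidableEq

open scoped Classical

/-- The value of register `j` after steps `0..i` equals the sum, over the set
`P^T_{i,j}` of contributing positions, of the corresponding input data values —
together with the initial value `R₀ j` when the sentinel `-1` belongs to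
`P^T_{i,j}` (i.e. register `j` is never reset with `new` during steps `0..i`). -/
theorem srt_register_value_eq_trail_sum
    {D : Type*} [AddCommGroup D] {k : ℕ}
    (upd : ℕ → Fin k → Upd) (s : ℕ → D) (R0 : Fin k → D) (R : ℕ → Fin k → D)
    (h0 : R 0 = R0)
    (hstep : ∀ i j, R (i + 1) j =
      match upd i j with
      | .old => R i j
      | .new => s i
      | .add => R i j + s i) :
    ∀ (i : ℕ) (j : Fin k),
      R (i + 1) j =
        (if ∀ n ∈ Finset.range (i + 1), upd n j ≠ Upd.new then R0 j else 0) +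
        ∑ n ∈ Finset.range (i + 1),
          if (upd n j = Upd.new ∨ upd n j = Upd.add) ∧
             (∀ n' ∈ Finset.Ioc n i, upd n' j ≠ Upd.new)
          then s n else 0 := by
  intro i j
  induction i with
  | zero =>
    rw [hstep, h0]
    have hIoc : Finset.Ioc 0 0 = (∅ : Finset ℕ) := by simp
    cases h : upd 0 j <;> simp [h, hIoc]
  | succ i ih =>
    -- the (i+1)-st `Ioc` condition restricted to `n ≤ i` is equivalent to the `i`-th one,
    -- whenever `upd (i+1) j ≠ Upd.new`
    have hiff : upd (i + 1) j ≠ Upd.new → ∀ n ∈ Finset.range (i + 1),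
        ((∀ n' ∈ Finset.Ioc n (i + 1), upd n' j ≠ Upd.new) ↔
         (∀ n' ∈ Finset.Ioc n i, upd n' j ≠ Upd.new)) := by
      intro hne n hn
      constructor
      · intro H n' hn'
        have hm := Finset.mem_Ioc.mp hn'
        exact H n' (Finset.mem_Ioc.mpr ⟨hm.1, hm.2.trans (Nat.le_succ i)⟩)
      · intro H n' hn'
        have hm := Finset.mem_Ioc.mp hn'
        rcases Nat.lt_or_ge n' (i + 1) with hlt | hge
        · exact H n' (Finset.mem_Ioc.mpr ⟨hm.1, Nat.lt_succ_iff.mp hlt⟩)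
        · have : n' = i + 1 := le_antisymm hm.2 hge
          rw [this]; exact hne
    have hinitIff : upd (i + 1) j ≠ Upd.new →
        ((∀ n ∈ Finset.range (i + 1), upd n j ≠ Upd.new) ↔
         (∀ n ∈ Finset.range (i + 1 + 1), upd n j ≠ Upd.new)) := by
      intro hne
      constructor
      · intro H n hn
        rcases Nat.lt_or_ge n (i + 1) with hlt | hge
        · exact H n (Finset.mem_range.mpr hlt)
        · have : n = i + 1 :=
            le_antisymm (Nat.lt_succ_iff.mp (Finset.mem_range.mp hn)) hge
          rw [this]; exact hne
      · intro H n hn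
        exact H n (Finset.mem_range.mpr
          ((Finset.mem_range.mp hn).trans (Nat.lt_succ_self _)))
    have hIocEmpty : ∀ n' ∈ Finset.Ioc (i + 1) (i + 1), upd n' j ≠ Upd.new := by
      intro n' hn'
      have hm := Finset.mem_Ioc.mp hn'
      omega
    have hlastpos : upd (i + 1) j = Upd.new ∨ upd (i + 1) j = Upd.add →
        ((upd (i + 1) j = Upd.new ∨ upd (i + 1) j = Upd.add) ∧
         ∀ n' ∈ Finset.Ioc (i + 1) (i + 1), upd n' j ≠ Upd.new) :=
      fun hor => ⟨hor, hIocEmpty⟩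
    cases h : upd (i + 1) j
    case new =>
      have h1 : ¬ ∀ n ∈ Finset.range (i + 1 + 1), upd n j ≠ Upd.new := by
        intro H; exact H (i + 1) (by simp) h
      rw [hstep, h]
      show s (i + 1) = _
      rw [Finset.sum_range_succ (n := i + 1), if_neg h1,
        if_pos (hlastpos (Or.inl h)), zero_add, right_eq_add]
      refine Finset.sum_eq_zero fun n hn => ?_
      rw [if_neg]
      rintro ⟨-, H⟩
      exact H (i + 1) (Finset.mem_Ioc.mpr ⟨Nat.lt_succ_of_le (Nat.lt_succ_iff.mp
        (Finset.mem_range.mp hn)), le_refl _⟩) h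
    case old =>
      have hne : upd (i + 1) j ≠ Upd.new := by simp [h]
      have hlastneg : ¬ ((upd (i + 1) j = Upd.new ∨ upd (i + 1) j = Upd.add) ∧
          ∀ n' ∈ Finset.Ioc (i + 1) (i + 1), upd n' j ≠ Upd.new) := by
        rintro ⟨hor, -⟩
        rw [h] at hor
        rcases hor with h' | h' <;> exact Upd.noConfusion h'
      rw [hstep, h]
      show R (i + 1) j = _
      rw [ih, Finset.sum_range_succ (n := i + 1), if_neg hlastneg, add_zero]
      congr 1
      · by_cases hc : ∀ n ∈ Finset.range (i + 1), upd n j ≠ Upd.new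
        · rw [if_pos hc, if_pos ((hinitIff hne).mp hc)]
        · rw [if_neg hc, if_neg (fun H => hc ((hinitIff hne).mpr H))]
      · exact Finset.sum_congr rfl fun n hn =>
          if_congr (and_congr_right' (hiff hne n hn).symm) rfl rfl
    case add =>
      have hne : upd (i + 1) j ≠ Upd.new := by simp [h]
      rw [hstep, h]
      show R (i + 1) j + s (i + 1) = _
      rw [ih, Finset.sum_range_succ (n := i + 1), if_pos (hlastpos (Or.inr h)),
        ← add_assoc]
      congr 2
      · by_cases hc : ∀ n ∈ Finset.range (i + 1), upd n j ≠ Upd.new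
        · rw [if_pos hc, if_pos ((hinitIff hne).mp hc)]
        · rw [if_neg hc, if_neg (fun H => hc ((hinitIff hne).mpr H))]
      · exact Finset.sum_congr rfl fun n hn =>
          if_congr (and_congr_right' (hiff hne n hn).symm) rfl rfl
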